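/- Fix nonnegative integer vectors m = (m_1, ..., m_n) and a = (a_1, ..., a_n) with ‖a‖ < ‖m‖ and a_1 = 0. Let f_i(m, a) be the fraction of all (m,a)-permutations whose last term is i. Then for every i, f_1(m, a) · m_i ≤ f_i(m, a) · m_1. -/

import Mathlib

/-- An `(m, a)`-permutation: a word of length `‖m‖ = ∑ i, m i` over the alphabet `Fin n`
in which letter `i` appears exactly `m i` times, and where the block of `a i` consecutive
positions starting at `∑_{j < i} a j` is forbidden from taking the value `i`. -/
def IsMAPerm (n : ℕ) (m a : Fin n → ℕ) (w : Fin (∑ i, m i) → Fin n) : Prop :=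
  (∀ i : Fin n, (Finset.univ.filter (fun p => w p = i)).card = m i) ∧
  ∀ i : Fin n, ∀ p : Fin (∑ i, m i),
    (∑ j ∈ Finset.univ.filter (fun j => j < i), a j) ≤ (p : ℕ) →
    (p : ℕ) < (∑ j ∈ Finset.univ.filter (fun j => j < i), a j) + a i →
    w p ≠ i

/-- The fraction of `(m, a)`-permutations whose last term is `i`. -/
noncomputable def fracLast (n : ℕ) (m a : Fin n → ℕ) (hA : ∑ i, a i < ∑ i, m i)
    (i : Fin n) : ℝ :=
  (Nat.card {w : Fin (∑ i, m i) → Fin n //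
      IsMAPerm n m a w ∧ w ⟨(∑ i, m i) - 1, by omega⟩ = i} : ℝ) /
    (Nat.card {w : Fin (∑ i, m i) → Fin n // IsMAPerm n m a w} : ℝ)

open Finset

/-- counting pairs (word, marked position carrying letter `k`). -/
lemma pairCount {M n : ℕ} (Q : (Fin M → Fin n) → Prop) [DecidablePred Q]
    [DecidableEq (Fin n)] (k : Fin n) (c : ℕ)
    (hc : ∀ w, Q w → (Finset.univ.filter fun p => w p = k).card = c) :
    (Finset.univ.filter fun x : (Fin M → Fin n) × Fin M => Q x.1 ∧ x.1 x.2 = k).card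
      = (Finset.univ.filter Q).card * c := by
  classical
  rw [Finset.card_eq_sum_card_fiberwise (f := Prod.fst) (t := Finset.univ.filter Q)
    (fun x hx => by simp only [mem_filter, mem_univ, true_and, Finset.mem_coe] at hx ⊢; exact hx.1)]
  rw [Finset.sum_congr rfl (fun w hw => ?_), Finset.sum_const, smul_eq_mul, mul_comm]
  have hw' : Q w := (Finset.mem_filter.mp hw).2
  have himg : ((Finset.univ.filter fun x : (Fin M → Fin n) × Fin M =>
        Q x.1 ∧ x.1 x.2 = k).filter fun x => x.1 = w)
      = (Finset.univ.filter fun p => w p = k).image (fun p => (w, p)) := by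
    ext ⟨w', p⟩
    simp only [Finset.mem_filter, Finset.mem_image, Finset.mem_univ, true_and,
      Prod.mk.injEq]
    constructor
    · rintro ⟨⟨hQ, hk⟩, rfl⟩
      exact ⟨p, hk, rfl, rfl⟩
    · rintro ⟨q, hq, rfl, rfl⟩
      exact ⟨⟨hw', hq⟩, rfl⟩
  rw [himg, Finset.card_image_of_injective _ (fun p q h => by
    simpa using congrArg Prod.snd h)]
  exact hc w hw'

theorem stmt_4 (n : ℕ) (hn : 0 < n) (m a : Fin n → ℕ) (hA : ∑ i, a i < ∑ i, m i)
    (ha1 : a ⟨0, hn⟩ = 0) (hm1 : 0 < m ⟨0, hn⟩)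
    (hne : Nonempty {w : Fin (∑ i, m i) → Fin n // IsMAPerm n m a w}) (i : Fin n) :
    fracLast n m a hA ⟨0, hn⟩ * (m i : ℝ) ≤ fracLast n m a hA i * (m ⟨0, hn⟩ : ℝ) := by
  classical
  have hM0 : 0 < ∑ i, m i := lt_of_le_of_lt (Nat.zero_le _) hA
  set M := ∑ i, m i with hMdef
  set z : Fin n := ⟨0, hn⟩ with hz
  set lastp : Fin M := ⟨M - 1, by omega⟩ with hlast
  -- the block of letter z is empty
  have hblockz : (∑ j ∈ Finset.univ.filter (fun j => j < z), a j) = 0 := by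
    have : Finset.univ.filter (fun j : Fin n => j < z) = ∅ := by
      ext j
      simp only [Finset.mem_filter, Finset.mem_univ, true_and, Finset.notMem_empty,
        iff_false]
      intro hj
      exact absurd (Fin.lt_def.mp hj) (by simp [hz])
    simp [this]
  -- any position inside a block is < ∑ a ≤ M - 1
  have hblockbound : ∀ j : Fin n,
      (∑ j' ∈ Finset.univ.filter (fun j' => j' < j), a j') + a j ≤ ∑ j', a j' := by
    intro j
    have h1 : (∑ j' ∈ Finset.univ.filter (fun j' => j' < j), a j') + a j
        = ∑ j' ∈ insert j (Finset.univ.filter (fun j' => j' < j)), a j' := by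
      rw [Finset.sum_insert (by simp)]
      ring
    rw [h1]
    exact Finset.sum_le_sum_of_subset (fun x _ => Finset.mem_univ x)
  -- swapping the marked position with the last position preserves IsMAPerm,
  -- provided the value moved to the marked position is z (whose block is empty).
  have hswap : ∀ (w : Fin M → Fin n) (q : Fin M), IsMAPerm n m a w → w lastp = z →
      IsMAPerm n m a (w ∘ Equiv.swap lastp q) := by
    intro w q hw hlastz
    constructor
    · intro j
      rw [← hw.1 j]
      refine Finset.card_bij' (fun p _ => Equiv.swap lastp q p)
        (fun p _ => Equiv.swap lastp q p) ?_ ?_ ?_ ?_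
      · intro p hp
        simp only [Finset.mem_filter, Finset.mem_univ, true_and,
          Function.comp_apply] at hp ⊢
        exact hp
      · intro p hp
        simp only [Finset.mem_filter, Finset.mem_univ, true_and,
          Function.comp_apply] at hp ⊢
        simpa [Equiv.swap_apply_self] using hp
      · intro p _; exact Equiv.swap_apply_self _ _ _
      · intro p _; exact Equiv.swap_apply_self _ _ _
    · intro j p hp1 hp2
      have hpin : (p : ℕ) < ∑ j', a j' := lt_of_lt_of_le hp2 (hblockbound j)
      have hplast : p ≠ lastp := by
        intro h
        rw [h] at hpin
        simp only [hlast] at hpin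
        omega
      by_cases hpq : p = q
      · subst hpq
        simp only [Function.comp_apply, Equiv.swap_apply_right, hlastz]
        intro hzj
        rw [← hzj] at hp1 hp2
        rw [hblockz, ha1] at hp2
        omega
      · rw [Function.comp_apply, Equiv.swap_apply_of_ne_of_ne hplast hpq]
        exact hw.2 j p hp1 hp2
  -- the main counting inequality
  have main : (Finset.univ.filter fun w : Fin M → Fin n =>
        IsMAPerm n m a w ∧ w lastp = z).card * m i
      ≤ (Finset.univ.filter fun w : Fin M → Fin n =>
        IsMAPerm n m a w ∧ w lastp = i).card * m z := by
    rw [← pairCount (fun w => IsMAPerm n m a w ∧ w lastp = z) i (m i)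
        (fun w hw => hw.1.1 i),
      ← pairCount (fun w => IsMAPerm n m a w ∧ w lastp = i) z (m z)
        (fun w hw => hw.1.1 z)]
    apply Finset.card_le_card_of_injOn
      (fun x => (x.1 ∘ Equiv.swap lastp x.2, x.2))
    · rintro ⟨w, q⟩ hx
      simp only [Finset.mem_filter, Finset.mem_univ, true_and, Finset.mem_coe] at hx ⊢
      obtain ⟨⟨hw, hlz⟩, hq⟩ := hx
      refine ⟨⟨hswap w q hw hlz, ?_⟩, ?_⟩
      · simp [Function.comp_apply, Equiv.swap_apply_left, hq]
      · simp [Function.comp_apply, Equiv.swap_apply_right, hlz]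
    · rintro ⟨w1, q1⟩ _ ⟨w2, q2⟩ _ h
      simp only [Prod.mk.injEq] at h
      obtain ⟨hw, hq⟩ := h
      subst hq
      refine Prod.ext ?_ rfl
      funext p
      have := congrFun hw (Equiv.swap lastp q1 p)
      simpa [Function.comp_apply, Equiv.swap_apply_self] using this
  -- translate Nat.card to Finset.card
  have hcard : ∀ j : Fin n,
      (Nat.card {w : Fin M → Fin n // IsMAPerm n m a w ∧ w ⟨M - 1, Nat.sub_lt hM0 Nat.one_pos⟩ = j})
        = (Finset.univ.filter fun w : Fin M → Fin n =>
            IsMAPerm n m a w ∧ w lastp = j).card := by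
    intro j
    rw [Nat.card_eq_fintype_card, Fintype.card_subtype]
  have hT : (0 : ℝ) < (Nat.card {w : Fin M → Fin n // IsMAPerm n m a w} : ℝ) := by
    haveI := hne
    exact_mod_cast Nat.card_pos (α := {w : Fin M → Fin n // IsMAPerm n m a w})
  simp only [fracLast]
  rw [div_mul_eq_mul_div, div_mul_eq_mul_div, div_le_div_iff₀ hT hT]
  refine mul_le_mul_of_nonneg_right ?_ hT.le
  have main' : (Nat.card {w : Fin M → Fin n //
        IsMAPerm n m a w ∧ w ⟨M - 1, Nat.sub_lt hM0 Nat.one_pos⟩ = z}) * m i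
      ≤ (Nat.card {w : Fin M → Fin n //
        IsMAPerm n m a w ∧ w ⟨M - 1, Nat.sub_lt hM0 Nat.one_pos⟩ = i}) * m z := by
    rw [hcard z, hcard i]
    exact main
  exact_mod_cast main'
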